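/- Let x_0 = 0, x_1, …, x_n be distinct points of the weighted Hamming cube H_W ⊆ ℝⁿ (so there are n+1 points in ℝⁿ) forming an affinely independent family, and let D be their distance matrix. Let B̂ be the n×n matrix whose (i,k) entry is (x_i k)/(w k) (which lies in {0,1}). Then det D = (−1)^n · 2^{n−1} · (∏_k w k) · (∑_k w k) · (det B̂)². -/

import Mathlib

open Matrix Finset

/-- The equivalence `Fin 1 ⊕ Fin n ≃ Fin (n+1)` sending `inl 0` to `0` and `inr i` to `i.succ`. -/
def sumEquivFin (n : ℕ) : Fin 1 ⊕ Fin n ≃ Fin (n + 1) where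
  toFun := Sum.elim (fun _ => 0) Fin.succ
  invFun := fun i => Fin.cases (Sum.inl 0) (fun j => Sum.inr j) i
  left_inv := by
    rintro (a | j)
    · simp [Subsingleton.elim a 0]
    · simp
  right_inv := by
    intro i
    induction i using Fin.cases <;> simp

/-- Graham--Pollak type formula for the determinant of the distance matrix of an
affinely independent `(n+1)`-point subset of a weighted Hamming cube containing `0`. -/
theorem stmt4 (n : ℕ) (hn : 1 ≤ n) (w : Fin n → ℝ) (hw : ∀ k, 0 < w k)
    (x : Fin (n + 1) → (Fin n → ℝ))
    (hx0 : x 0 = 0)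
    (hxH : ∀ i k, x i k = 0 ∨ x i k = w k)
    (hinj : Function.Injective x)
    (haff : AffineIndependent ℝ x)
    (D : Matrix (Fin (n + 1)) (Fin (n + 1)) ℝ)
    (hD : ∀ i j, D i j = ∑ k, |x i k - x j k|)
    (B : Matrix (Fin n) (Fin n) ℝ)
    (hB : ∀ i k, B i k = x i.succ k / w k) :
    D.det = (-1 : ℝ) ^ n * 2 ^ (n - 1) * (∏ k, w k) * (∑ k, w k) * B.det ^ 2 := by
  classical
  have hwne : ∀ k, w k ≠ 0 := fun k => (hw k).ne'
  have hxnn : ∀ i k, 0 ≤ x i k := fun i k =>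
    (hxH i k).elim (fun h => h.ge) (fun h => h ▸ (hw k).le)
  set t : Fin (n + 1) → ℝ := fun i => ∑ k, x i k with ht
  -- pointwise absolute value identity on the cube
  have habs : ∀ i j k, |x i k - x j k| = x i k + x j k - 2 * (x i k * x j k / w k) := by
    intro i j k
    rcases hxH i k with h1 | h1 <;> rcases hxH j k with h2 | h2 <;> rw [h1, h2]
    · simp
    · rw [zero_sub, abs_neg, abs_of_pos (hw k)]; field_simp; ring
    · rw [sub_zero, abs_of_pos (hw k)]; field_simp; ring
    · rw [sub_self, abs_zero]; field_simp; ring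
  have hDt : ∀ i j, D i j = t i + t j - 2 * ∑ k, x i k * x j k / w k := by
    intro i j
    rw [hD]
    simp only [habs]
    rw [Finset.sum_sub_distrib, Finset.sum_add_distrib, ← Finset.mul_sum]
  have hD00 : D 0 0 = 0 := by rw [hD]; simp
  have hD0 : ∀ i, D i 0 = t i := by
    intro i
    rw [hD, ht]
    refine Finset.sum_congr rfl fun k _ => ?_
    rw [hx0]
    simpa using abs_of_nonneg (hxnn i k)
  have hD0' : ∀ j, D 0 j = t j := by
    intro j
    rw [hD, ht]
    refine Finset.sum_congr rfl fun k _ => ?_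
    rw [hx0]
    simp only [Pi.zero_apply, zero_sub, abs_neg]
    exact abs_of_nonneg (hxnn j k)
  -- the elementary row-operation matrix
  set E : Matrix (Fin (n + 1)) (Fin (n + 1)) ℝ :=
    fun i j => if i = j then 1 else if j = 0 then -1 else 0 with hE
  have hsum : ∀ (f : Fin (n + 1) → ℝ) i,
      (∑ a, E i a * f a) = f i - (if i = 0 then 0 else f 0) := by
    intro f i
    have key : ∀ a, E i a * f a =
        (if a = i then f a else 0) + (if a = 0 then (if i = 0 then 0 else -f 0) else 0) := by
      intro a
      by_cases hai : a = i
      · subst hai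
        by_cases ha0 : a = 0 <;> simp [hE, ha0]
      · have : ¬ i = a := fun h => hai h.symm
        by_cases ha0 : a = 0
        · subst ha0
          simp [hE, this, hai, fun h : i = 0 => hai h.symm]
        · simp [hE, this, hai, ha0]
    rw [Finset.sum_congr rfl fun a _ => key a, Finset.sum_add_distrib,
      Finset.sum_ite_eq' Finset.univ i f, Finset.sum_ite_eq' Finset.univ (0 : Fin (n + 1))
        (fun _ => if i = 0 then (0 : ℝ) else -f 0)]
    by_cases hi : i = 0 <;> simp [hi] <;> ring
  have hEdet : E.det = 1 := by
    have hut : Eᵀ.BlockTriangular id := by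
      intro i j hij
      have hij' : j < i := hij
      have h1 : ¬ j = i := ne_of_lt hij'
      have h2 : ¬ i = 0 := by
        intro h
        rw [h] at hij'
        exact (Fin.not_lt.mpr (Fin.zero_le j)) hij'
      change E j i = 0
      simp [hE, Matrix.transpose_apply, h1, h2]
    have := Matrix.det_of_upperTriangular hut
    rw [Matrix.det_transpose] at this
    rw [this]
    refine Finset.prod_eq_one fun i _ => ?_
    change E i i = 1
    simp [hE]
  -- block matrices
  set u : Matrix (Fin n) (Fin 1) ℝ := fun k _ => w k with hu
  set Q : Matrix (Fin n) (Fin n) ℝ := B * Matrix.diagonal w * Bᵀ with hQ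
  set Dd : Matrix (Fin n) (Fin n) ℝ := (-2 : ℝ) • Q with hDd
  set C : Matrix (Fin n) (Fin 1) ℝ := B * u with hC
  set Bb : Matrix (Fin 1) (Fin n) ℝ := uᵀ * Bᵀ with hBb
  set F : Matrix (Fin 1 ⊕ Fin n) (Fin 1 ⊕ Fin n) ℝ :=
    Matrix.fromBlocks 0 Bb C Dd with hF
  have hCentry : ∀ i (o : Fin 1), C i o = t i.succ := by
    intro i o
    rw [hC, Matrix.mul_apply, ht]
    refine Finset.sum_congr rfl fun k _ => ?_
    rw [hB, hu]
    exact div_mul_cancel₀ _ (hwne k)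
  have hBbentry : ∀ (o : Fin 1) j, Bb o j = t j.succ := by
    intro o j
    rw [hBb, Matrix.mul_apply, ht]
    refine Finset.sum_congr rfl fun k _ => ?_
    rw [Matrix.transpose_apply, Matrix.transpose_apply, hB, hu, mul_comm]
    exact div_mul_cancel₀ _ (hwne k)
  have hQentry : ∀ i j, Q i j = ∑ k, x i.succ k * x j.succ k / w k := by
    intro i j
    rw [hQ, Matrix.mul_apply]
    refine Finset.sum_congr rfl fun k _ => ?_
    rw [Matrix.mul_diagonal, Matrix.transpose_apply, hB, hB,
      div_mul_cancel₀ _ (hwne k), mul_div_assoc]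
  -- conjugation identity
  have hconj : E * D * Eᵀ = F.submatrix ⇑(sumEquivFin n).symm ⇑(sumEquivFin n).symm := by
    ext i j
    have lhs_eq : (E * D * Eᵀ) i j =
        (D i j - (if i = 0 then 0 else D 0 j)) -
          (if j = 0 then 0 else D i 0 - (if i = 0 then 0 else D 0 0)) := by
      have h1 : ∀ b, (E * D) i b = D i b - (if i = 0 then 0 else D 0 b) := by
        intro b
        rw [Matrix.mul_apply]
        exact hsum (fun a => D a b) i
      rw [Matrix.mul_apply]
      simp only [Matrix.transpose_apply]
      rw [show (∑ b, (E * D) i b * E j b) = ∑ b, E j b * (E * D) i b from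
        Finset.sum_congr rfl fun b _ => mul_comm _ _]
      rw [hsum (fun b => (E * D) i b) j, h1, h1]
    rw [lhs_eq]
    have hsymm0 : (sumEquivFin n).symm 0 = Sum.inl 0 := by
      rw [Equiv.symm_apply_eq]; rfl
    have hsymms : ∀ a : Fin n, (sumEquivFin n).symm a.succ = Sum.inr a := by
      intro a; rw [Equiv.symm_apply_eq]; rfl
    induction i using Fin.cases with
    | zero =>
      induction j using Fin.cases with
      | zero => simp [Matrix.submatrix_apply, hsymm0, hF, hD00]
      | succ j =>
        simp only [Matrix.submatrix_apply, hsymm0, hsymms, hF,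
          Matrix.fromBlocks_apply₁₂, Fin.succ_ne_zero, if_false, if_true, eq_self_iff_true]
        rw [hBbentry, hD0', hD00]
        simp
    | succ i =>
      induction j using Fin.cases with
      | zero =>
        simp only [Matrix.submatrix_apply, hsymm0, hsymms, hF,
          Matrix.fromBlocks_apply₂₁, Fin.succ_ne_zero, if_false, if_true, eq_self_iff_true]
        rw [hCentry, hD0']
        simp [hD0, ht, hx0]
      | succ j =>
        simp only [Matrix.submatrix_apply, hsymms, hF,
          Matrix.fromBlocks_apply₂₂, Fin.succ_ne_zero, if_false]
        rw [hDd]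
        simp only [Matrix.smul_apply, smul_eq_mul]
        rw [hQentry, hD00, hDt, hD0, hD0']
        ring
  -- determinant of B is nonzero
  set X : Matrix (Fin n) (Fin n) ℝ := Matrix.of (fun i => x i.succ) with hX
  have hXB : X = B * Matrix.diagonal w := by
    ext i k
    rw [Matrix.mul_diagonal, hB, div_mul_cancel₀ _ (hwne k)]
    simp [hX]
  have hli : LinearIndependent ℝ (fun i : Fin n => x i.succ) := by
    have h := (affineIndependent_iff_linearIndependent_vsub ℝ x 0).mp haff
    have h2 := h.comp
      (fun i : Fin n => (⟨i.succ, Fin.succ_ne_zero i⟩ : {i : Fin (n + 1) // i ≠ 0}))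
      (fun a b hab => by
        have := congrArg Subtype.val hab
        simpa using this)
    simpa [Function.comp_def, hx0] using h2
  have hXdet : IsUnit X.det := by
    rw [← Matrix.isUnit_iff_isUnit_det, ← Matrix.linearIndependent_rows_iff_isUnit]
    exact hli
  have hBdet : B.det ≠ 0 := by
    intro h
    rw [hXB, Matrix.det_mul, h, zero_mul] at hXdet
    exact (by simp : ¬ IsUnit (0 : ℝ)) hXdet
  have hBdetU : IsUnit B.det := isUnit_iff_ne_zero.mpr hBdet
  have hBTdetU : IsUnit Bᵀ.det := by rwa [Matrix.det_transpose]
  have hQdet : Q.det = B.det ^ 2 * ∏ k, w k := by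
    rw [hQ, Matrix.det_mul, Matrix.det_mul, Matrix.det_transpose, Matrix.det_diagonal]
    ring
  have hprodw : (∏ k, w k) ≠ 0 := Finset.prod_ne_zero_iff.mpr fun k _ => hwne k
  have hQdetU : IsUnit Q.det := by
    rw [hQdet]
    exact isUnit_iff_ne_zero.mpr (mul_ne_zero (pow_ne_zero 2 hBdet) hprodw)
  haveI : Invertible Q := Q.invertibleOfIsUnitDet hQdetU
  have hDdDetU : IsUnit Dd.det := by
    rw [hDd, Matrix.det_smul]
    exact (IsUnit.pow _ (isUnit_iff_ne_zero.mpr (by norm_num))).mul hQdetU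
  haveI : Invertible Dd := Dd.invertibleOfIsUnitDet hDdDetU
  -- inverse of the diagonal
  have hdiagmul : Matrix.diagonal (fun k => (w k)⁻¹) * Matrix.diagonal w = 1 := by
    rw [Matrix.diagonal_mul_diagonal]
    have : (fun k => (w k)⁻¹ * w k) = fun _ => (1 : ℝ) :=
      funext fun k => inv_mul_cancel₀ (hwne k)
    rw [this, Matrix.diagonal_one]
  have hQinv : Q⁻¹ = Bᵀ⁻¹ * Matrix.diagonal (fun k => (w k)⁻¹) * B⁻¹ := by
    apply Matrix.inv_eq_left_inv
    rw [hQ]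
    have step1 : (Bᵀ⁻¹ * Matrix.diagonal (fun k => (w k)⁻¹) * B⁻¹) *
        (B * Matrix.diagonal w * Bᵀ) =
        Bᵀ⁻¹ * (Matrix.diagonal (fun k => (w k)⁻¹) *
          (B⁻¹ * (B * (Matrix.diagonal w * Bᵀ)))) := by
      simp only [Matrix.mul_assoc]
    rw [step1,
      show B⁻¹ * (B * (Matrix.diagonal w * Bᵀ)) = Matrix.diagonal w * Bᵀ from by
        rw [← Matrix.mul_assoc, Matrix.nonsing_inv_mul B hBdetU, Matrix.one_mul],
      show Matrix.diagonal (fun k => (w k)⁻¹) * (Matrix.diagonal w * Bᵀ) = Bᵀ from by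
        rw [← Matrix.mul_assoc, hdiagmul, Matrix.one_mul],
      Matrix.nonsing_inv_mul Bᵀ hBTdetU]
  have hDdinv : Dd⁻¹ = (-2 : ℝ)⁻¹ • Q⁻¹ := by
    apply Matrix.inv_eq_left_inv
    rw [hDd, Matrix.smul_mul, Matrix.mul_smul, Matrix.nonsing_inv_mul Q hQdetU,
      smul_smul]
    norm_num
  have hScm : Bb * Dd⁻¹ * C =
      (-2 : ℝ)⁻¹ • (uᵀ * Matrix.diagonal (fun k => (w k)⁻¹) * u) := by
    rw [hDdinv, hQinv, hBb, hC, Matrix.mul_smul, Matrix.smul_mul]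
    congr 1
    simp only [Matrix.mul_assoc]
    rw [show B⁻¹ * (B * u) = u from by
        rw [← Matrix.mul_assoc, Matrix.nonsing_inv_mul B hBdetU, Matrix.one_mul],
      show Bᵀ * (Bᵀ⁻¹ * (Matrix.diagonal (fun k => (w k)⁻¹) * u)) =
          Matrix.diagonal (fun k => (w k)⁻¹) * u from by
        rw [← Matrix.mul_assoc, Matrix.mul_nonsing_inv Bᵀ hBTdetU, Matrix.one_mul]]
  have hentry : (uᵀ * Matrix.diagonal (fun k => (w k)⁻¹) * u) 0 0 = ∑ k, w k := by
    rw [Matrix.mul_apply]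
    refine Finset.sum_congr rfl fun k _ => ?_
    rw [Matrix.mul_diagonal, Matrix.transpose_apply, hu]
    field_simp
  -- determinant of the 1×1 Schur complement
  have h11 : ((0 : Matrix (Fin 1) (Fin 1) ℝ) - Bb * Dd⁻¹ * C).det = (∑ k, w k) / 2 := by
    rw [Matrix.det_fin_one, Matrix.sub_apply, Matrix.zero_apply, hScm,
      Matrix.smul_apply, hentry, smul_eq_mul]
    ring
  -- putting it all together
  have hdet1 : D.det = (E * D * Eᵀ).det := by
    rw [Matrix.det_mul, Matrix.det_mul, Matrix.det_transpose, hEdet, one_mul, mul_one]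
  rw [hdet1, hconj, Matrix.det_submatrix_equiv_self, hF, Matrix.det_fromBlocks₂₂,
    Matrix.invOf_eq_nonsing_inv, h11, hDd, Matrix.det_smul, Fintype.card_fin, hQdet]
  have h2 : (2 : ℝ) ^ (n - 1) * 2 = 2 ^ n := by
    rw [← pow_succ]
    congr 1
    omega
  have hm2 : (-2 : ℝ) ^ n = (-1) ^ n * 2 ^ n := by
    rw [← neg_one_mul, mul_pow]
  rw [hm2, ← h2]
  ring
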